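/- If φ belongs to the space P̂ = P₃ ⊕ span{x³y − xy³} and φ vanishes at all twelve Gauss points g₁,…,g₁₂ of the square [−1,1]², then φ is the zero polynomial. -/

import Mathlib

open MvPolynomial

noncomputable def m (i j : ℕ) : Fin 2 →₀ ℕ := Finsupp.single 0 i + Finsupp.single 1 j

lemma m_apply0 (i j : ℕ) : m i j 0 = i := by simp [m]
lemma m_apply1 (i j : ℕ) : m i j 1 = j := by simp [m]

lemma m_inj {i j k l : ℕ} : m i j = m k l ↔ i = k ∧ j = l := by
  constructor
  · intro h
    exact ⟨by rw [← m_apply0 i j, h, m_apply0], by rw [← m_apply1 i j, h, m_apply1]⟩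
  · rintro ⟨rfl, rfl⟩; rfl

lemma fin2_eq_m (d : Fin 2 →₀ ℕ) : d = m (d 0) (d 1) := by
  ext i
  fin_cases i
  · simp [m_apply0]
  · simp [m_apply1]

lemma dsum_eq (d : Fin 2 →₀ ℕ) : (d.sum fun _ e => e) = d 0 + d 1 := by
  rw [Finsupp.sum_fintype _ _ (fun _ => rfl), Fin.sum_univ_two]

lemma eval_deg3 (p : MvPolynomial (Fin 2) ℝ) (hp : p.totalDegree ≤ 3) (x y : ℝ) :
    eval ![x, y] p = coeff (m 0 0) p + coeff (m 1 0) p * x + coeff (m 0 1) p * y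
      + coeff (m 2 0) p * x ^ 2 + coeff (m 1 1) p * (x * y) + coeff (m 0 2) p * y ^ 2
      + coeff (m 3 0) p * x ^ 3 + coeff (m 2 1) p * (x ^ 2 * y)
      + coeff (m 1 2) p * (x * y ^ 2) + coeff (m 0 3) p * y ^ 3 := by
  classical
  have hsub : p.support ⊆ ({m 0 0, m 1 0, m 0 1, m 2 0, m 1 1, m 0 2, m 3 0, m 2 1,
      m 1 2, m 0 3} : Finset (Fin 2 →₀ ℕ)) := by
    intro d hd
    have hdeg : d 0 + d 1 ≤ 3 := by
      have h1 := MvPolynomial.le_totalDegree hd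
      rw [dsum_eq] at h1
      omega
    rw [fin2_eq_m d]
    have hi : d 0 ≤ 3 := by omega
    have hj : d 1 ≤ 3 := by omega
    interval_cases h : d 0 <;> interval_cases h2 : d 1 <;>
      simp_all [Finset.mem_insert, Finset.mem_singleton, m_inj]
  rw [MvPolynomial.eval_eq', Finset.sum_subset hsub (by
    intro d _ hd
    rw [MvPolynomial.notMem_support_iff.mp hd]; ring)]
  rw [Finset.sum_insert (by simp [m_inj]), Finset.sum_insert (by simp [m_inj]),
    Finset.sum_insert (by simp [m_inj]), Finset.sum_insert (by simp [m_inj]),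
    Finset.sum_insert (by simp [m_inj]), Finset.sum_insert (by simp [m_inj]),
    Finset.sum_insert (by simp [m_inj]), Finset.sum_insert (by simp [m_inj]),
    Finset.sum_insert (by simp [m_inj]), Finset.sum_singleton]
  simp [Fin.prod_univ_two, m_apply0, m_apply1]
  ring
noncomputable def s : ℝ := Real.sqrt (3 / 5)

/-- The twelve Gauss points of the reference square `[-1,1]²`. -/
noncomputable def g : Fin 12 → ℝ × ℝ :=
  ![(-s, -1), (0, -1), (s, -1),
    (1, -s), (1, 0), (1, s),
    (s, 1), (0, 1), (-s, 1),
    (-1, s), (-1, 0), (-1, -s)]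

set_option maxHeartbeats 1000000 in
/-- Lemma 2.3 (unisolvency): if `φ ∈ P̂ = P₃ ⊕ span{x³y - xy³}` vanishes at all
twelve Gauss points of `[-1,1]²`, then `φ = 0`. -/
theorem unisolvency (φ : MvPolynomial (Fin 2) ℝ)
    (hφ : ∃ (p : MvPolynomial (Fin 2) ℝ) (c : ℝ), p.totalDegree ≤ 3 ∧
      φ = p + C c * (X 0 ^ 3 * X 1 - X 0 * X 1 ^ 3))
    (hvan : ∀ j : Fin 12, eval ![(g j).1, (g j).2] φ = 0) :
    φ = 0 := by
  obtain ⟨p, c, hp, rfl⟩ := hφ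
  have hs2 : s ^ 2 = 3 / 5 := by unfold s; exact Real.sq_sqrt (by norm_num)
  have hspos : 0 < s := Real.sqrt_pos.mpr (by norm_num)
  have hsne : s ≠ 0 := ne_of_gt hspos
  set a00 := coeff (m 0 0) p with ha00
  set a10 := coeff (m 1 0) p with ha10
  set a01 := coeff (m 0 1) p with ha01
  set a20 := coeff (m 2 0) p with ha20
  set a11 := coeff (m 1 1) p with ha11
  set a02 := coeff (m 0 2) p with ha02
  set a30 := coeff (m 3 0) p with ha30
  set a21 := coeff (m 2 1) p with ha21
  set a12 := coeff (m 1 2) p with ha12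
  set a03 := coeff (m 0 3) p with ha03
  have heval : ∀ x y : ℝ, eval ![x, y] (p + C c * (X 0 ^ 3 * X 1 - X 0 * X 1 ^ 3))
      = a00 + a10 * x + a01 * y + a20 * x ^ 2 + a11 * (x * y) + a02 * y ^ 2
        + a30 * x ^ 3 + a21 * (x ^ 2 * y) + a12 * (x * y ^ 2) + a03 * y ^ 3
        + c * (x ^ 3 * y - x * y ^ 3) := by
    intro x y
    rw [map_add, eval_deg3 p hp x y]
    simp only [map_mul, map_sub, map_pow, eval_C, eval_X, Matrix.cons_val_zero,
      Matrix.cons_val_one, Matrix.head_cons]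
    rfl
  have h1 := hvan 0
  have h2 := hvan 1
  have h3 := hvan 2
  have h4 := hvan 3
  have h5 := hvan 4
  have h6 := hvan 5
  have h7 := hvan 6
  have h8 := hvan 7
  have h9 := hvan 8
  have h10 := hvan 9
  have h11 := hvan 10
  have h12 := hvan 11
  rw [show (![(g 0).1, (g 0).2] : Fin 2 → ℝ) = ![-s, -1] from rfl, heval] at h1
  rw [show (![(g 1).1, (g 1).2] : Fin 2 → ℝ) = ![0, -1] from rfl, heval] at h2
  rw [show (![(g 2).1, (g 2).2] : Fin 2 → ℝ) = ![s, -1] from rfl, heval] at h3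
  rw [show (![(g 3).1, (g 3).2] : Fin 2 → ℝ) = ![1, -s] from rfl, heval] at h4
  rw [show (![(g 4).1, (g 4).2] : Fin 2 → ℝ) = ![1, 0] from rfl, heval] at h5
  rw [show (![(g 5).1, (g 5).2] : Fin 2 → ℝ) = ![1, s] from rfl, heval] at h6
  rw [show (![(g 6).1, (g 6).2] : Fin 2 → ℝ) = ![s, 1] from rfl, heval] at h7
  rw [show (![(g 7).1, (g 7).2] : Fin 2 → ℝ) = ![0, 1] from rfl, heval] at h8
  rw [show (![(g 8).1, (g 8).2] : Fin 2 → ℝ) = ![-s, 1] from rfl, heval] at h9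
  rw [show (![(g 9).1, (g 9).2] : Fin 2 → ℝ) = ![-1, s] from rfl, heval] at h10
  rw [show (![(g 10).1, (g 10).2] : Fin 2 → ℝ) = ![-1, 0] from rfl, heval] at h11
  rw [show (![(g 11).1, (g 11).2] : Fin 2 → ℝ) = ![-1, -s] from rfl, heval] at h12
  have E1 : a00 - a01 + a02 - a03 = 0 := by linear_combination h2
  have E2 : a00 + a01 + a02 + a03 = 0 := by linear_combination h8
  have E3 : a00 + a10 + a20 + a30 = 0 := by linear_combination h5
  have E4 : a00 - a10 + a20 - a30 = 0 := by linear_combination h11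
  have e5 : (a20 - a21) * s ^ 2 = 0 := by linear_combination (1/2) * h1 + (1/2) * h3 - h2
  have e6 : (a20 + a21) * s ^ 2 = 0 := by linear_combination (1/2) * h7 + (1/2) * h9 - h8
  have e7 : (a02 + a12) * s ^ 2 = 0 := by linear_combination (1/2) * h4 + (1/2) * h6 - h5
  have e8 : (a02 - a12) * s ^ 2 = 0 := by linear_combination (1/2) * h10 + (1/2) * h12 - h11
  rw [hs2] at e5 e6 e7 e8
  have e9 : s * ((a10 - a11 + a12 + c) + 3/5 * (a30 - c)) = 0 := by
    linear_combination (1/2) * h3 - (1/2) * h1 - (a30 - c) * s * hs2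
  have e10 : s * ((a10 + a11 + a12 - c) + 3/5 * (a30 + c)) = 0 := by
    linear_combination (1/2) * h7 - (1/2) * h9 - (a30 + c) * s * hs2
  have e11 : s * ((a01 + a11 + a21 + c) + 3/5 * (a03 - c)) = 0 := by
    linear_combination (1/2) * h6 - (1/2) * h4 - (a03 - c) * s * hs2
  have e12 : s * ((a01 - a11 + a21 - c) + 3/5 * (a03 + c)) = 0 := by
    linear_combination (1/2) * h10 - (1/2) * h12 - (a03 + c) * s * hs2
  have E5 : a20 - a21 = 0 := by
    rcases mul_eq_zero.mp e5 with h | h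
    · exact h
    · norm_num at h
  have E6 : a20 + a21 = 0 := by
    rcases mul_eq_zero.mp e6 with h | h
    · exact h
    · norm_num at h
  have E7 : a02 + a12 = 0 := by
    rcases mul_eq_zero.mp e7 with h | h
    · exact h
    · norm_num at h
  have E8 : a02 - a12 = 0 := by
    rcases mul_eq_zero.mp e8 with h | h
    · exact h
    · norm_num at h
  clear heval hvan
  have E9 := (mul_eq_zero.mp e9).resolve_left hsne
  have E10 := (mul_eq_zero.mp e10).resolve_left hsne
  have E11 := (mul_eq_zero.mp e11).resolve_left hsne
  have E12 := (mul_eq_zero.mp e12).resolve_left hsne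
  clear h1 h2 h3 h4 h5 h6 h7 h8 h9 h10 h11 h12 e5 e6 e7 e8 e9 e10 e11 e12
  have z00 : a00 = 0 := by linarith only [E1, E2, E3, E4, E5, E6, E7, E8, E9, E10, E11, E12]
  have z20 : a20 = 0 := by linarith only [E1, E2, E3, E4, E5, E6, E7, E8, E9, E10, E11, E12]
  have z21 : a21 = 0 := by linarith only [E1, E2, E3, E4, E5, E6, E7, E8, E9, E10, E11, E12]
  have z02 : a02 = 0 := by linarith only [E1, E2, E3, E4, E5, E6, E7, E8, E9, E10, E11, E12]
  have z12 : a12 = 0 := by linarith only [E1, E2, E3, E4, E5, E6, E7, E8, E9, E10, E11, E12]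
  have z30 : a30 = 0 := by linarith only [E1, E2, E3, E4, E5, E6, E7, E8, E9, E10, E11, E12]
  have z10 : a10 = 0 := by linarith only [E1, E2, E3, E4, E5, E6, E7, E8, E9, E10, E11, E12]
  have z03 : a03 = 0 := by linarith only [E1, E2, E3, E4, E5, E6, E7, E8, E9, E10, E11, E12]
  have z01 : a01 = 0 := by linarith only [E1, E2, E3, E4, E5, E6, E7, E8, E9, E10, E11, E12]
  have zc : c = 0 := by linarith only [E9, E10, E11, E12]
  have z11 : a11 = 0 := by linarith only [E1, E2, E3, E4, E5, E6, E7, E8, E9, E10, E11, E12]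
  have hp0 : p = 0 := by
    ext d
    rw [coeff_zero]
    by_cases hd : d 0 + d 1 ≤ 3
    · rw [fin2_eq_m d]
      have hi : d 0 ≤ 3 := by omega
      have hj : d 1 ≤ 3 := by omega
      interval_cases h : d 0 <;> interval_cases h' : d 1 <;>
        first
          | exact ha00 ▸ z00 | exact ha10 ▸ z10 | exact ha01 ▸ z01
          | exact ha20 ▸ z20 | exact ha11 ▸ z11 | exact ha02 ▸ z02
          | exact ha30 ▸ z30 | exact ha21 ▸ z21 | exact ha12 ▸ z12
          | exact ha03 ▸ z03 | omega
    · apply coeff_eq_zero_of_totalDegree_lt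
      have hsum : (d.sum fun _ e => e) = ∑ i ∈ d.support, d i := rfl
      rw [← hsum, dsum_eq]
      omega
  rw [hp0, zc]
  simp
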